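/- Let I be a homogeneous ideal in S = k[x_0,...,x_r], and let τ be an elimination order for x_0 inducing a term order τ_0 on S̄ = k[x_1,...,x_r]. Then the initial ideal of I decomposes as in_τ(I) = Σ_p x_0^p · in_{τ_0}(K_p(I)), where K_p(I) is the p-th partial elimination ideal of I. -/

import Mathlib

open MvPolynomial

/-- A finite graded free resolution of a (homogeneous) ideal `I` in a polynomial ring. -/
structure GradedFreeRes {k : Type*} [Field k] {N : ℕ}
    (I : Ideal (MvPolynomial (Fin N) k)) where
  rk : ℕ → ℕ
  shift : (i : ℕ) → Fin (rk i) → ℕ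
  len : ℕ
  rk_eq_zero : ∀ i, len < i → rk i = 0
  gen : Fin (rk 0) → MvPolynomial (Fin N) k
  gen_hom : ∀ j, (gen j).IsHomogeneous (shift 0 j)
  mat : (i : ℕ) → Matrix (Fin (rk i)) (Fin (rk (i + 1))) (MvPolynomial (Fin N) k)
  mat_hom : ∀ i a b, mat i a b = 0 ∨
    (shift i a ≤ shift (i + 1) b ∧ (mat i a b).IsHomogeneous (shift (i + 1) b - shift i a))
  aug_surj : LinearMap.range
    (Fintype.linearCombination (MvPolynomial (Fin N) k) gen) = I
  aug_exact : LinearMap.range (mat 0).mulVecLin =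
    LinearMap.ker
      (Fintype.linearCombination (MvPolynomial (Fin N) k) gen)
  complex_exact : ∀ i,
    LinearMap.range (mat (i + 1)).mulVecLin = LinearMap.ker (mat i).mulVecLin

/-- The Castelnuovo–Mumford regularity of a homogeneous ideal, defined as the minimum over
all finite graded free resolutions of `I` of the maximum of `shift i j - i`. -/
noncomputable def cmReg {k : Type*} [Field k] {N : ℕ}
    (I : Ideal (MvPolynomial (Fin N) k)) : ℕ :=
  sInf { d | ∃ R : GradedFreeRes I, ∀ i, ∀ j : Fin (R.rk i), R.shift i j ≤ d + i }

/-- The leading exponent (degree) of a polynomial with respect to a monomial order. -/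
noncomputable def ldeg {k : Type*} [Field k] {N : ℕ} (τ : MonomialOrder (Fin N))
    (f : MvPolynomial (Fin N) k) : Fin N →₀ ℕ :=
  τ.toSyn.symm (f.support.sup fun m => τ.toSyn m)

/-- The initial ideal of `I` with respect to a monomial order `τ`. -/
noncomputable def initialIdeal {k : Type*} [Field k] {N : ℕ} (τ : MonomialOrder (Fin N))
    (I : Ideal (MvPolynomial (Fin N) k)) : Ideal (MvPolynomial (Fin N) k) :=
  Ideal.span { q | ∃ f ∈ I, f ≠ 0 ∧ q = monomial (ldeg τ f) (1 : k) }

/-- A homogeneous ideal: one containing all homogeneous components of its elements. -/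
def IsHomogeneousIdeal {k : Type*} [Field k] {N : ℕ}
    (I : Ideal (MvPolynomial (Fin N) k)) : Prop :=
  ∀ f ∈ I, ∀ d : ℕ, homogeneousComponent d f ∈ I

/-- The `p`-th partial elimination ideal (as a set): leading coefficients with respect to the
variable `x₀` of the elements of `I` of `x₀`-degree `p`, together with `0`. -/
noncomputable def pelimSet {k : Type*} [Field k] {N : ℕ}
    (I : Ideal (MvPolynomial (Fin (N + 1)) k)) (p : ℕ) :
    Set (MvPolynomial (Fin N) k) :=
  insert 0 { h | ∃ f ∈ I, f ≠ 0 ∧ (finSuccEquiv k N f).natDegree = p ∧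
    (finSuccEquiv k N f).leadingCoeff = h }

/-- An elimination order for the first variable: any monomial involving `x₀` is larger than
any monomial not involving `x₀`. -/
def IsElimOrder {N : ℕ} (τ : MonomialOrder (Fin (N + 1))) : Prop :=
  ∀ a b : Fin (N + 1) →₀ ℕ, a 0 = 0 → b 0 ≠ 0 → τ.toSyn a < τ.toSyn b

/-- `τ₀` is the restriction of `τ` to the last `N` variables. -/
def InducedOrder {N : ℕ} (τ : MonomialOrder (Fin (N + 1))) (τ₀ : MonomialOrder (Fin N)) : Prop :=
  ∀ a b : Fin N →₀ ℕ,
    τ₀.toSyn a ≤ τ₀.toSyn b ↔ τ.toSyn (a.mapDomain Fin.succ) ≤ τ.toSyn (b.mapDomain Fin.succ)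

/-- The linear change of coordinates on a polynomial ring given by a matrix. -/
noncomputable def coordChange {k : Type*} [Field k] {N : ℕ}
    (g : Matrix (Fin N) (Fin N) k) :
    MvPolynomial (Fin N) k →ₐ[k] MvPolynomial (Fin N) k :=
  aeval fun i => ∑ j, C (g i j) * X j

/-- `J` is the generic initial ideal of `I` with respect to `τ`: for every change of
coordinates `g` in a nonempty Zariski-open subset of `GL_N`, the initial ideal of `g · I`
is `J`. -/
noncomputable def IsGin {k : Type*} [Field k] {N : ℕ} (τ : MonomialOrder (Fin N))
    (I J : Ideal (MvPolynomial (Fin N) k)) : Prop :=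
  ∃ P : MvPolynomial (Fin N × Fin N) k, P ≠ 0 ∧
    ∀ g : Matrix (Fin N) (Fin N) k, IsUnit g.det →
      eval (fun q => g q.1 q.2) P ≠ 0 →
        initialIdeal τ (Ideal.map (coordChange g).toRingHom I) = J


lemma mapDomain_succ_apply_zero {N : ℕ} (d : Fin N →₀ ℕ) :
    (d.mapDomain Fin.succ) 0 = 0 :=
  Finsupp.mapDomain_notin_range _ _ (by simp [Set.range, (Fin.succ_ne_zero _).symm])

lemma cons_eq_add {N : ℕ} (i : ℕ) (m : Fin N →₀ ℕ) :
    (m.cons i : Fin (N + 1) →₀ ℕ) = Finsupp.single 0 i + m.mapDomain Fin.succ := by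
  ext j
  refine Fin.cases ?_ (fun j => ?_) j
  · simp [Finsupp.cons_zero, mapDomain_succ_apply_zero]
  · simp [Finsupp.cons_succ, Finsupp.single_apply, (Fin.succ_ne_zero j).symm,
      Finsupp.mapDomain_apply (Fin.succ_injective N)]

lemma elim_lt {N : ℕ} {τ : MonomialOrder (Fin (N + 1))} (helim : IsElimOrder τ)
    {a b : Fin (N + 1) →₀ ℕ} (h : a 0 < b 0) : τ.toSyn a < τ.toSyn b := by
  have ha : a = Finsupp.single 0 (a 0) + (Finsupp.tail a).mapDomain Fin.succ := by
    rw [← cons_eq_add, Finsupp.cons_tail]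
  have hb : b = Finsupp.single 0 (a 0) +
      (Finsupp.single 0 (b 0 - a 0) + (Finsupp.tail b).mapDomain Fin.succ) := by
    rw [← add_assoc, ← Finsupp.single_add, Nat.add_sub_cancel' h.le, ← cons_eq_add,
      Finsupp.cons_tail]
  have h1 : τ.toSyn ((Finsupp.tail a).mapDomain Fin.succ) <
      τ.toSyn (Finsupp.single 0 (b 0 - a 0) + (Finsupp.tail b).mapDomain Fin.succ) := by
    apply helim
    · exact mapDomain_succ_apply_zero _
    · simp [mapDomain_succ_apply_zero, Nat.sub_ne_zero_of_lt h]
  calc τ.toSyn a = τ.toSyn (Finsupp.single 0 (a 0)) +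
        τ.toSyn ((Finsupp.tail a).mapDomain Fin.succ) := by rw [← map_add, ← ha]
    _ < τ.toSyn (Finsupp.single 0 (a 0)) +
        τ.toSyn (Finsupp.single 0 (b 0 - a 0) + (Finsupp.tail b).mapDomain Fin.succ) :=
      add_lt_add_right h1 _
    _ = τ.toSyn b := by rw [← map_add, ← hb]

lemma ldeg_mem {k : Type*} [Field k] {N : ℕ} (τ : MonomialOrder (Fin N))
    {g : MvPolynomial (Fin N) k} (hg : g ≠ 0) : ldeg τ g ∈ g.support := by
  obtain ⟨m, hm, he⟩ := Finset.exists_mem_eq_sup g.support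
    (MvPolynomial.support_nonempty.mpr hg) (fun m => τ.toSyn m)
  rw [ldeg, he, AddEquiv.symm_apply_apply]
  exact hm

lemma le_ldeg {k : Type*} [Field k] {N : ℕ} (τ : MonomialOrder (Fin N))
    {g : MvPolynomial (Fin N) k} {m : Fin N →₀ ℕ} (hm : m ∈ g.support) :
    τ.toSyn m ≤ τ.toSyn (ldeg τ g) := by
  rw [ldeg, AddEquiv.apply_symm_apply]
  exact Finset.le_sup hm

lemma ldeg_eq {k : Type*} [Field k] {N : ℕ} (τ : MonomialOrder (Fin (N + 1)))
    (τ₀ : MonomialOrder (Fin N)) (helim : IsElimOrder τ) (hind : InducedOrder τ τ₀)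
    {f : MvPolynomial (Fin (N + 1)) k} (hf : f ≠ 0) :
    ldeg τ f = Finsupp.cons (finSuccEquiv k N f).natDegree
      (ldeg τ₀ (finSuccEquiv k N f).leadingCoeff) := by
  have hP0 : finSuccEquiv k N f ≠ 0 :=
    (map_ne_zero_iff _ (AlgEquiv.injective _)).mpr hf
  have hg : (finSuccEquiv k N f).leadingCoeff ≠ 0 := Polynomial.leadingCoeff_ne_zero.mpr hP0
  set p := (finSuccEquiv k N f).natDegree with hp
  set D := ldeg τ₀ (finSuccEquiv k N f).leadingCoeff with hD
  have hcoeff : (finSuccEquiv k N f).coeff p = (finSuccEquiv k N f).leadingCoeff :=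
    Polynomial.coeff_natDegree
  have hmem : (D.cons p) ∈ f.support := by
    rw [← mem_support_coeff_finSuccEquiv, hcoeff]
    exact ldeg_mem τ₀ hg
  apply τ.toSyn.injective
  rw [ldeg, AddEquiv.apply_symm_apply]
  apply le_antisymm
  · apply Finset.sup_le
    intro m hm
    have hm0 : m 0 ≤ p := by
      rw [hp, natDegree_finSuccEquiv, degreeOf_eq_sup]
      exact Finset.le_sup (f := fun m => m 0) hm
    rcases lt_or_eq_of_le hm0 with hlt | heq
    · exact (elim_lt helim (by rw [Finsupp.cons_zero]; exact hlt)).le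
    · have ht : Finsupp.tail m ∈ (finSuccEquiv k N f).leadingCoeff.support := by
        rw [← hcoeff, mem_support_coeff_finSuccEquiv, ← heq, Finsupp.cons_tail]
        exact hm
      have hle := (hind _ _).mp (le_ldeg τ₀ ht)
      calc τ.toSyn m = τ.toSyn (Finsupp.single 0 p) +
            τ.toSyn ((Finsupp.tail m).mapDomain Fin.succ) := by
            rw [← map_add, ← cons_eq_add, ← heq, Finsupp.cons_tail]
        _ ≤ τ.toSyn (Finsupp.single 0 p) + τ.toSyn (D.mapDomain Fin.succ) :=
            add_le_add_right hle _
        _ = τ.toSyn (D.cons p) := by rw [← map_add, ← cons_eq_add]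
  · exact Finset.le_sup hmem

lemma finSuccEquiv_rename_succ {k : Type*} [Field k] {N : ℕ} (c : MvPolynomial (Fin N) k) :
    finSuccEquiv k N (rename Fin.succ c) = Polynomial.C c := by
  induction c using MvPolynomial.induction_on with
  | C a => simp [finSuccEquiv_apply]
  | add p q hp hq => simp [map_add, hp, hq]
  | mul_X p i hp => simp [map_mul, hp, finSuccEquiv_X_succ]

lemma pelim_add {k : Type*} [Field k] {N : ℕ} {I : Ideal (MvPolynomial (Fin (N + 1)) k)}
    {p : ℕ} {a b : MvPolynomial (Fin N) k}
    (ha : a ∈ pelimSet I p) (hb : b ∈ pelimSet I p) : a + b ∈ pelimSet I p := by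
  rw [pelimSet, Set.mem_insert_iff] at ha hb ⊢
  rcases ha with rfl | ⟨f, hfI, hf0, hdf, hlf⟩
  · simpa using hb
  rcases hb with rfl | ⟨f', hfI', hf0', hdf', hlf'⟩
  · exact Or.inr ⟨f, hfI, hf0, hdf, by simpa using hlf⟩
  by_cases hab : a + b = 0
  · exact Or.inl hab
  have ca : (finSuccEquiv k N f).coeff p = a := by
    rw [← hdf, Polynomial.coeff_natDegree, hlf]
  have cb : (finSuccEquiv k N f').coeff p = b := by
    rw [← hdf', Polynomial.coeff_natDegree, hlf']
  have hc : (finSuccEquiv k N (f + f')).coeff p = a + b := by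
    rw [map_add, Polynomial.coeff_add, ca, cb]
  have hnd : (finSuccEquiv k N (f + f')).natDegree = p := by
    apply le_antisymm
    · rw [map_add]
      exact (Polynomial.natDegree_add_le _ _).trans (by rw [hdf, hdf', max_self])
    · exact Polynomial.le_natDegree_of_ne_zero (by rw [hc]; exact hab)
  refine Or.inr ⟨f + f', I.add_mem hfI hfI', ?_, hnd, ?_⟩
  · intro h0
    apply hab
    rw [← hc, h0, map_zero, Polynomial.coeff_zero]
  · rw [Polynomial.leadingCoeff, hnd, hc]

lemma pelim_smul {k : Type*} [Field k] {N : ℕ} {I : Ideal (MvPolynomial (Fin (N + 1)) k)}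
    {p : ℕ} (c : MvPolynomial (Fin N) k) {x : MvPolynomial (Fin N) k}
    (hx : x ∈ pelimSet I p) : c * x ∈ pelimSet I p := by
  rw [pelimSet, Set.mem_insert_iff] at hx ⊢
  by_cases h : c * x = 0
  · exact Or.inl h
  rcases hx with rfl | ⟨f, hfI, hf0, hdf, hlf⟩
  · simp at h
  have hc0 : c ≠ 0 := left_ne_zero_of_mul h
  have hP0 : finSuccEquiv k N f ≠ 0 :=
    (map_ne_zero_iff _ (AlgEquiv.injective _)).mpr hf0
  have hC0 : (Polynomial.C c : Polynomial (MvPolynomial (Fin N) k)) ≠ 0 := by simpa using hc0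
  have he : finSuccEquiv k N (rename Fin.succ c * f) =
      Polynomial.C c * finSuccEquiv k N f := by
    rw [map_mul, finSuccEquiv_rename_succ]
  refine Or.inr ⟨rename Fin.succ c * f, I.mul_mem_left _ hfI, ?_, ?_, ?_⟩
  · intro h0
    exact (mul_ne_zero hC0 hP0) (by rw [← he, h0, map_zero])
  · rw [he, Polynomial.natDegree_mul hC0 hP0, Polynomial.natDegree_C, zero_add, hdf]
  · rw [he, Polynomial.leadingCoeff_mul, Polynomial.leadingCoeff_C, hlf]

lemma pelim_exists {k : Type*} [Field k] {N : ℕ} {I : Ideal (MvPolynomial (Fin (N + 1)) k)}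
    {p : ℕ} {g : MvPolynomial (Fin N) k} (hg : g ∈ Ideal.span (pelimSet I p)) (hg0 : g ≠ 0) :
    ∃ f ∈ I, f ≠ 0 ∧ (finSuccEquiv k N f).natDegree = p ∧
      (finSuccEquiv k N f).leadingCoeff = g := by
  let J : Ideal (MvPolynomial (Fin N) k) :=
  { carrier := pelimSet I p
    zero_mem' := Set.mem_insert _ _
    add_mem' := fun ha hb => pelim_add ha hb
    smul_mem' := fun c x hx => by simpa [smul_eq_mul] using pelim_smul c hx }
  have hJ : g ∈ J := Ideal.span_le.mpr (fun x hx => hx) hg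
  rcases hJ with h0 | ⟨f, hfI, hf0, hdf, hlf⟩
  · exact absurd h0 hg0
  · exact ⟨f, hfI, hf0, hdf, hlf⟩

lemma mono_split {k : Type*} [Field k] {N : ℕ} (p : ℕ) (d : Fin N →₀ ℕ) :
    (monomial (d.cons p) (1 : k) : MvPolynomial (Fin (N + 1)) k) =
      X 0 ^ p * rename Fin.succ (monomial d 1) := by
  rw [rename_monomial, X_pow_eq_monomial, monomial_mul, one_mul, ← cons_eq_add]


/-- For a homogeneous ideal `I` and an elimination order `τ` for `x₀` inducing `τ₀` on the
remaining variables, the initial ideal decomposes as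
`in_τ(I) = Σ_p x₀^p · in_{τ₀}(K_p(I))`. -/

theorem stmt1 {k : Type*} [Field k] {N : ℕ} (τ : MonomialOrder (Fin (N + 1)))
    (τ₀ : MonomialOrder (Fin N)) (helim : IsElimOrder τ) (hind : InducedOrder τ τ₀)
    (I : Ideal (MvPolynomial (Fin (N + 1)) k)) (hI : IsHomogeneousIdeal I) :
    initialIdeal τ I = ⨆ p : ℕ,
      Ideal.span {(X 0 : MvPolynomial (Fin (N + 1)) k) ^ p} *
        Ideal.map (rename (Fin.succ : Fin N → Fin (N + 1))).toRingHom
          (initialIdeal τ₀ (Ideal.span (pelimSet I p))) := by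
  apply le_antisymm
  · rw [initialIdeal, Ideal.span_le]
    rintro q ⟨f, hfI, hf0, rfl⟩
    have hP0 : finSuccEquiv k N f ≠ 0 :=
      (map_ne_zero_iff _ (AlgEquiv.injective _)).mpr hf0
    have hg : (finSuccEquiv k N f).leadingCoeff ≠ 0 := Polynomial.leadingCoeff_ne_zero.mpr hP0
    apply Submodule.mem_iSup_of_mem (finSuccEquiv k N f).natDegree
    rw [ldeg_eq τ τ₀ helim hind hf0, mono_split]
    apply Ideal.mul_mem_mul
    · exact Ideal.subset_span rfl
    · apply Ideal.mem_map_of_mem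
      apply Ideal.subset_span
      exact ⟨(finSuccEquiv k N f).leadingCoeff,
        Ideal.subset_span (Or.inr ⟨f, hfI, hf0, rfl, rfl⟩), hg, rfl⟩
  · apply iSup_le
    intro p
    rw [initialIdeal, Ideal.map_span, Ideal.span_mul_span']
    rw [Ideal.span_le]
    rintro y ⟨a, ha, b, ⟨q, ⟨g, hgspan, hg0, rfl⟩, rfl⟩, rfl⟩
    rw [Set.mem_singleton_iff] at ha
    subst ha
    obtain ⟨f, hfI, hf0, hdf, hlf⟩ := pelim_exists hgspan hg0
    have key : (X 0 : MvPolynomial (Fin (N + 1)) k) ^ p *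
        (rename Fin.succ) ((monomial (ldeg τ₀ g)) 1) = monomial (ldeg τ f) (1 : k) := by
      rw [ldeg_eq τ τ₀ helim hind hf0, hdf, hlf, mono_split]
    show (X 0 : MvPolynomial (Fin (N + 1)) k) ^ p *
        (rename Fin.succ) ((monomial (ldeg τ₀ g)) 1) ∈ initialIdeal τ I
    rw [key]
    exact Ideal.subset_span ⟨f, hfI, hf0, rfl⟩
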